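/- With W, S₀, q as in the knockoff setting, define T₀ = min{ t : #{j : W_j ≤ −t} / max(#{j : W_j ≥ t}, 1) ≤ q } and Ŝ = {j : W_j ≥ T₀}. Then E[ #(Ŝ ∩ S₀) / (#Ŝ + q⁻¹) ] ≤ q. -/

import Mathlib

open MeasureTheory
open scoped Classical
open Finset

/-- Candidate thresholds: attained magnitudes `t = |W_j| > 0` at which the knockoff
estimate of FDP, `(c + #{j : W_j ≤ −t}) / max(#{j : W_j ≥ t}, 1)`, is at most `q`
(`c = 0` for the (non-plus) knockoff filter). -/
noncomputable def knockoffCandidates (c q : ℝ) {m : ℕ} (w : Fin m → ℝ) : Finset ℝ :=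
  (Finset.univ.image fun j => |w j|).filter fun t =>
    0 < t ∧ (c + ((Finset.univ.filter fun j => w j ≤ -t).card : ℝ)) /
        max ((Finset.univ.filter fun j => t ≤ w j).card : ℝ) 1 ≤ q

/-- The knockoff selected set `Ŝ = {j : W_j ≥ T₀}`, where `T₀` is the smallest
candidate threshold; if no threshold qualifies, the selected set is empty. -/
noncomputable def knockoffSelect (c q : ℝ) {m : ℕ} (w : Fin m → ℝ) : Finset (Fin m) :=
  if h : (knockoffCandidates c q w).Nonempty then
    Finset.univ.filter fun j => (knockoffCandidates c q w).min' h ≤ w j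
  else ∅


namespace KO

/-- number of `true`s among indices `≥ k`. -/
def cntA (k : ℕ) {n : ℕ} (ε : Fin n → Bool) : ℕ :=
  (Finset.univ.filter fun i : Fin n => k ≤ (i : ℕ) ∧ ε i = true).card

/-- number of `false`s among indices `≥ k`. -/
def cntB (k : ℕ) {n : ℕ} (ε : Fin n → Bool) : ℕ :=
  (Finset.univ.filter fun i : Fin n => k ≤ (i : ℕ) ∧ ε i = false).card

noncomputable def stopSet (P : ℕ → ℕ → Prop) {n : ℕ} (ε : Fin n → Bool) : Finset ℕ :=
  (Finset.range (n+1)).filter fun k => P k (cntA k ε)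

noncomputable def fval (P : ℕ → ℕ → Prop) {n : ℕ} (ε : Fin n → Bool) : ℝ :=
  if h : (stopSet P ε).Nonempty then
    (cntA ((stopSet P ε).min' h) ε : ℝ) / (1 + (cntB ((stopSet P ε).min' h) ε : ℝ))
  else 0

lemma fval_nonneg (P : ℕ → ℕ → Prop) {n : ℕ} (ε : Fin n → Bool) : 0 ≤ fval P ε := by
  unfold fval
  split
  · positivity
  · exact le_refl 0

lemma cntA_le (k : ℕ) {n : ℕ} (ε : Fin n → Bool) : cntA k ε ≤ n := by
  unfold cntA
  calc _ ≤ (Finset.univ : Finset (Fin n)).card := Finset.card_filter_le _ _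
  _ = n := by simp

lemma cntA_add_cntB (k : ℕ) {n : ℕ} (ε : Fin n → Bool) :
    cntA k ε + cntB k ε = (Finset.univ.filter fun i : Fin n => k ≤ (i : ℕ)).card := by
  unfold cntA cntB
  rw [← Finset.filter_filter, ← Finset.filter_filter]
  have h2 : (Finset.filter (fun i => ε i = false) (Finset.filter (fun i : Fin n => k ≤ (i:ℕ)) Finset.univ))
      = Finset.filter (fun i => ¬ ε i = true) (Finset.filter (fun i : Fin n => k ≤ (i:ℕ)) Finset.univ) :=
    Finset.filter_congr (by intro i _; simp)
  rw [h2, Finset.card_filter_add_card_filter_not]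

lemma cntA_add_cntB_zero {n : ℕ} (ε : Fin n → Bool) : cntA 0 ε + cntB 0 ε = n := by
  rw [cntA_add_cntB]; simp

lemma cntA_succ_cons (k : ℕ) {n : ℕ} (b : Bool) (τ : Fin n → Bool) :
    cntA (k+1) (Fin.cons b τ) = cntA k τ := by
  unfold cntA
  rw [Finset.card_filter, Finset.card_filter, Fin.sum_univ_succ]
  simp [Fin.cons_succ, Nat.succ_le_succ_iff]

lemma cntB_succ_cons (k : ℕ) {n : ℕ} (b : Bool) (τ : Fin n → Bool) :
    cntB (k+1) (Fin.cons b τ) = cntB k τ := by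
  unfold cntB
  rw [Finset.card_filter, Finset.card_filter, Fin.sum_univ_succ]
  simp [Fin.cons_succ, Nat.succ_le_succ_iff]

lemma cntA_zero_cons {n : ℕ} (b : Bool) (τ : Fin n → Bool) :
    cntA 0 (Fin.cons b τ) = (if b then 1 else 0) + cntA 0 τ := by
  unfold cntA
  rw [Finset.card_filter, Finset.card_filter, Fin.sum_univ_succ]
  simp [Fin.cons_succ]

lemma fval_of_stop_zero (P : ℕ → ℕ → Prop) {n : ℕ} (ε : Fin n → Bool)
    (h : P 0 (cntA 0 ε)) :
    fval P ε = (cntA 0 ε : ℝ) / (1 + (cntB 0 ε : ℝ)) := by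
  have h0 : (0:ℕ) ∈ stopSet P ε := by
    simp only [stopSet, Finset.mem_filter, Finset.mem_range]
    exact ⟨by omega, h⟩
  have hne : (stopSet P ε).Nonempty := ⟨0, h0⟩
  have hmin : (stopSet P ε).min' hne = 0 :=
    le_antisymm (Finset.min'_le _ _ h0) (Nat.zero_le _)
  rw [fval, dif_pos hne, hmin]

lemma algebra_step (n a' : ℕ) (h : a' + 1 ≤ n) :
    (n.choose (a'+1) : ℝ) * (a'+1) / (1 + (n:ℝ) - (a'+1))
      + (n.choose a' : ℝ) * a' / (1 + (n:ℝ) - a')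
      ≤ ((n+1).choose (a'+1) : ℝ) * (a'+1) / (1 + ((n:ℝ)+1) - (a'+1)) := by
  have hd : (1 : ℝ) ≤ (n:ℝ) - a' := by
    have : ((a' + 1 : ℕ) : ℝ) ≤ (n : ℕ) := Nat.cast_le.mpr h
    push_cast at this; linarith
  have key : (n.choose (a'+1) : ℝ) * (a'+1) = (n.choose a' : ℝ) * ((n:ℝ) - a') := by
    have h1 := Nat.choose_succ_right_eq n a'
    have h2 : ((n - a' : ℕ) : ℝ) = (n:ℝ) - a' := by
      rw [Nat.cast_sub (by omega)]
    have h3 : ((n.choose (a'+1) * (a'+1) : ℕ) : ℝ) = ((n.choose a' * (n - a') : ℕ) : ℝ) := by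
      exact_mod_cast congrArg (Nat.cast (R := ℝ)) h1
    push_cast at h3
    rw [h3, h2]
  rw [Nat.choose_succ_succ]
  push_cast
  set y := (n.choose a' : ℝ) with hy
  set x := (n.choose (a'+1) : ℝ) with hx
  set d := (n:ℝ) - a' with hdd
  have hd0 : d ≠ 0 := by intro h0; rw [h0] at hd; linarith
  have hd1 : d + 1 ≠ 0 := by intro h0; nlinarith
  have hden1 : (1 + (n:ℝ) - ((a':ℝ)+1)) = d := by rw [hdd]; ring
  have hden2 : (1 + (n:ℝ) - (a':ℝ)) = d + 1 := by rw [hdd]; ring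
  have hden3 : (1 + ((n:ℝ)+1) - ((a':ℝ)+1)) = d + 1 := by rw [hdd]; ring
  rw [hden1, hden2, hden3]
  apply le_of_eq
  rw [div_add_div _ _ hd0 hd1, div_eq_div_iff (by positivity) hd1]
  nlinarith [key]


lemma stopSet_cons (P : ℕ → ℕ → Prop) {n : ℕ} (b : Bool) (τ : Fin n → Bool)
    (h : ¬ P 0 (cntA 0 (Fin.cons b τ))) :
    stopSet P (Fin.cons b τ) = (stopSet (fun k a => P (k+1) a) τ).image Nat.succ := by
  ext k
  cases k with
  | zero =>
    simp only [stopSet, Finset.mem_filter, Finset.mem_range, Finset.mem_image]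
    constructor
    · rintro ⟨-, hP⟩; exact absurd hP h
    · rintro ⟨x, -, hx⟩; exact absurd hx (Nat.succ_ne_zero x)
  | succ k =>
    simp only [stopSet, Finset.mem_filter, Finset.mem_range, Finset.mem_image,
      cntA_succ_cons]
    constructor
    · rintro ⟨hk, hP⟩
      exact ⟨k, ⟨by omega, hP⟩, rfl⟩
    · rintro ⟨x, ⟨hx, hP⟩, hxe⟩
      have hxk : x = k := by omega
      subst hxk
      exact ⟨by omega, hP⟩

lemma min'_image_succ (s : Finset ℕ) (h : s.Nonempty) :
    (s.image Nat.succ).min' (h.image _) = (s.min' h).succ := by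
  apply le_antisymm
  · exact Finset.min'_le _ _ (Finset.mem_image_of_mem _ (Finset.min'_mem s h))
  · apply Finset.le_min'
    rintro y hy
    rcases Finset.mem_image.1 hy with ⟨x, hx, rfl⟩
    exact Nat.succ_le_succ (Finset.min'_le _ _ hx)

lemma fval_cons_of_not (P : ℕ → ℕ → Prop) {n : ℕ} (b : Bool) (τ : Fin n → Bool)
    (h : ¬ P 0 (cntA 0 (Fin.cons b τ))) :
    fval P (Fin.cons b τ) = fval (fun k a => P (k+1) a) τ := by
  unfold fval
  rw [stopSet_cons P b τ h]
  by_cases h' : (stopSet (fun k a => P (k+1) a) τ).Nonempty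
  · rw [dif_pos (h'.image _), dif_pos h', min'_image_succ _ h', cntA_succ_cons, cntB_succ_cons]
  · rw [dif_neg, dif_neg h']
    simpa using h'

lemma card_cnt_eq (n a : ℕ) :
    (Finset.univ.filter fun ε : Fin n → Bool => cntA 0 ε = a).card = n.choose a := by
  induction n generalizing a with
  | zero =>
    cases a with
    | zero =>
      rw [Nat.choose_zero_right]
      rw [Finset.card_eq_one]
      refine ⟨fun i => i.elim0, ?_⟩
      ext ε
      simp only [Finset.mem_filter, Finset.mem_univ, true_and, Finset.mem_singleton]
      constructor
      · intro _; funext i; exact i.elim0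
      · intro h; subst h; rfl
    | succ a =>
      rw [Nat.choose_eq_zero_of_lt (by omega), Finset.card_eq_zero]
      ext ε
      simp only [Finset.mem_filter, Finset.mem_univ, true_and, Finset.notMem_empty,
        iff_false]
      have := cntA_le 0 ε
      omega
  | succ n ih =>
    have key : ∀ b : ℕ, (∑ τ : Fin n → Bool, if cntA 0 τ = b then (1:ℕ) else 0) = n.choose b := by
      intro b; rw [← Finset.card_filter]; exact ih b
    rw [Finset.card_filter]
    rw [← Equiv.sum_comp (Fin.consEquiv (fun _ => Bool))
      (fun ε : Fin (n+1) → Bool => if cntA 0 ε = a then (1:ℕ) else 0),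
      Fintype.sum_prod_type, Fintype.sum_bool]
    have hc : ∀ (b : Bool) (τ : Fin n → Bool),
        cntA 0 ((Fin.consEquiv (fun _ => Bool)) (b, τ)) = (if b then 1 else 0) + cntA 0 τ :=
      fun b τ => cntA_zero_cons b τ
    simp only [hc, if_true, if_false, Bool.false_eq_true, Nat.zero_add]
    cases a with
    | zero =>
      have h1 : (∑ τ : Fin n → Bool, if 1 + cntA 0 τ = 0 then (1:ℕ) else 0) = 0 :=
        Finset.sum_eq_zero (by intro τ _; simp)
      rw [h1, key 0]
      simp
    | succ a =>
      have h1 : ∀ τ : Fin n → Bool, (1 + cntA 0 τ = a + 1) = (cntA 0 τ = a) := by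
        intro τ; apply propext; omega
      simp only [h1]
      rw [key a, key (a+1), Nat.choose_succ_succ]

lemma abstract_stratified (n : ℕ) (P : ℕ → ℕ → Prop) (a : ℕ) (ha : a ≤ n) :
    ∑ ε ∈ Finset.univ.filter (fun ε : Fin n → Bool => cntA 0 ε = a), fval P ε
      ≤ (n.choose a : ℝ) * a / (1 + (n : ℝ) - a) := by
  induction n generalizing P a with
  | zero =>
    interval_cases a
    have h0 : ∀ ε : Fin 0 → Bool, fval P ε = 0 := by
      intro ε
      unfold fval
      split
      · rename_i hne
        have hA : cntA ((stopSet P ε).min' hne) ε = 0 := Nat.le_zero.mp (cntA_le _ ε)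
        rw [hA]; simp
      · rfl
    rw [Finset.sum_congr rfl (fun ε _ => h0 ε)]
    simp
  | succ n ih =>
    by_cases hP : P 0 a
    · have hc : (((n+1) - a : ℕ) : ℝ) = ((n:ℝ)+1) - a := by
        rw [Nat.cast_sub ha]; push_cast; ring
      have hterm : ∀ ε ∈ Finset.univ.filter (fun ε : Fin (n+1) → Bool => cntA 0 ε = a),
          fval P ε = (a : ℝ) / (1 + (((n+1) - a : ℕ) : ℝ)) := by
        intro ε hε
        rw [Finset.mem_filter] at hε
        have hB : cntB 0 ε = (n+1) - a := by
          have := cntA_add_cntB_zero ε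
          omega
        rw [fval_of_stop_zero P ε (by rw [hε.2]; exact hP), hε.2, hB]
      rw [Finset.sum_congr rfl hterm, Finset.sum_const, card_cnt_eq, nsmul_eq_mul, hc]
      apply le_of_eq
      push_cast
      ring
    · -- not stopped at 0
      rw [Finset.sum_filter]
      rw [← Equiv.sum_comp (Fin.consEquiv (fun _ => Bool))
        (fun ε : Fin (n+1) → Bool => if cntA 0 ε = a then fval P ε else 0),
        Fintype.sum_prod_type, Fintype.sum_bool]
      have hsplit : ∀ (b : Bool) (τ : Fin n → Bool),
          (Fin.consEquiv (fun _ => Bool)) (b, τ) = Fin.cons b τ := fun _ _ => rfl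
      simp only [hsplit, cntA_zero_cons, if_true, if_false, Bool.false_eq_true, Nat.zero_add]
      have ht : (∑ τ : Fin n → Bool, if 1 + cntA 0 τ = a then fval P (Fin.cons true τ) else 0)
          = ∑ τ : Fin n → Bool, if 1 + cntA 0 τ = a then fval (fun k b => P (k+1) b) τ else 0 := by
        apply Finset.sum_congr rfl
        intro τ _
        by_cases hcnd : 1 + cntA 0 τ = a
        · rw [if_pos hcnd, if_pos hcnd, fval_cons_of_not]
          have hA : cntA 0 (Fin.cons true τ) = a := by rw [cntA_zero_cons]; simpa using hcnd
          rw [hA]; exact hP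
        · rw [if_neg hcnd, if_neg hcnd]
      have hf : (∑ τ : Fin n → Bool, if cntA 0 τ = a then fval P (Fin.cons false τ) else 0)
          = ∑ τ : Fin n → Bool, if cntA 0 τ = a then fval (fun k b => P (k+1) b) τ else 0 := by
        apply Finset.sum_congr rfl
        intro τ _
        by_cases hcnd : cntA 0 τ = a
        · rw [if_pos hcnd, if_pos hcnd, fval_cons_of_not]
          have hA : cntA 0 (Fin.cons false τ) = a := by rw [cntA_zero_cons]; simpa using hcnd
          rw [hA]; exact hP
        · rw [if_neg hcnd, if_neg hcnd]
      rw [ht, hf]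
      rcases (by omega : a = 0 ∨ a = n+1 ∨ (1 ≤ a ∧ a ≤ n)) with rfl | rfl | ⟨ha1, han⟩
      · have h1 : (∑ τ : Fin n → Bool, if 1 + cntA 0 τ = 0 then
            fval (fun k b => P (k+1) b) τ else 0) = 0 :=
          Finset.sum_eq_zero (by intro τ _; rw [if_neg (by omega)])
        have h2 := ih (fun k b => P (k+1) b) 0 (Nat.zero_le n)
        rw [Finset.sum_filter] at h2
        rw [h1, zero_add]
        refine h2.trans ?_
        simp
      · have h2 : (∑ τ : Fin n → Bool, if cntA 0 τ = n+1 then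
            fval (fun k b => P (k+1) b) τ else 0) = 0 :=
          Finset.sum_eq_zero (by intro τ _; rw [if_neg (by have := cntA_le 0 τ; omega)])
        have hcnd : ∀ τ : Fin n → Bool, (1 + cntA 0 τ = n+1) = (cntA 0 τ = n) := by
          intro τ; apply propext; omega
        simp only [hcnd]
        have h1 := ih (fun k b => P (k+1) b) n le_rfl
        rw [Finset.sum_filter] at h1
        rw [h2, add_zero]
        refine h1.trans ?_
        rw [Nat.choose_self, Nat.choose_self]
        have e1 : (1 + (n:ℝ) - n) = 1 := by ring
        have e2 : (1 + ((n+1:ℕ):ℝ) - ((n+1:ℕ):ℝ)) = 1 := by ring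
        rw [e1, e2]
        push_cast
        simp only [one_mul, div_one]
        linarith
      · obtain ⟨a', rfl⟩ : ∃ a', a = a' + 1 := ⟨a-1, by omega⟩
        have hcnd : ∀ τ : Fin n → Bool, (1 + cntA 0 τ = a'+1) = (cntA 0 τ = a') := by
          intro τ; apply propext; omega
        simp only [hcnd]
        have h1 := ih (fun k b => P (k+1) b) a' (by omega)
        have h2 := ih (fun k b => P (k+1) b) (a'+1) (by omega)
        rw [Finset.sum_filter] at h1 h2
        have halg := algebra_step n a' (by omega)
        have hcast1 : ((a'+1:ℕ):ℝ) = (a':ℝ)+1 := by push_cast; ring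
        have hcast2 : ((n+1:ℕ):ℝ) = (n:ℝ)+1 := by push_cast; ring
        rw [hcast1, hcast2]
        calc _ ≤ (n.choose a' : ℝ) * a' / (1 + (n:ℝ) - a')
              + (n.choose (a'+1) : ℝ) * ((a':ℝ)+1) / (1 + (n:ℝ) - ((a':ℝ)+1)) := by
              rw [← hcast1]
              exact add_le_add h1 h2
          _ ≤ _ := by rw [← hcast1] at halg ⊢; linarith [halg]


lemma abstract_total (n : ℕ) (P : ℕ → ℕ → Prop) :
    ∑ ε : Fin n → Bool, fval P ε ≤ (2:ℝ)^n := by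
  rw [← Finset.sum_fiberwise_of_maps_to (g := fun ε : Fin n → Bool => cntA 0 ε)
    (t := Finset.range (n+1))
    (fun ε _ => Finset.mem_range.mpr (Nat.lt_succ_of_le (cntA_le 0 ε)))]
  calc ∑ a ∈ Finset.range (n+1),
        ∑ ε ∈ Finset.univ.filter (fun ε : Fin n → Bool => cntA 0 ε = a), fval P ε
      ≤ ∑ a ∈ Finset.range (n+1), (n.choose a : ℝ) * a / (1 + (n : ℝ) - a) :=
        Finset.sum_le_sum (fun a hain =>
          abstract_stratified n P a (by have := Finset.mem_range.mp hain; omega))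
    _ ≤ (2:ℝ)^n := by
        rw [Finset.sum_range_succ']
        have h0 : (n.choose 0 : ℝ) * (0:ℕ) / (1 + (n : ℝ) - (0:ℕ)) = 0 := by
          push_cast; ring
        rw [h0, add_zero]
        have hterm : ∀ i ∈ Finset.range n,
            (n.choose (i+1) : ℝ) * ((i+1 : ℕ) : ℝ) / (1 + (n : ℝ) - ((i+1 : ℕ) : ℝ))
              = (n.choose i : ℝ) := by
          intro i hi
          have hin : i + 1 ≤ n := Finset.mem_range.mp hi
          have key : (n.choose (i+1) : ℝ) * ((i+1:ℕ):ℝ) = (n.choose i : ℝ) * ((n:ℝ) - i) := by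
            have h1 := Nat.choose_succ_right_eq n i
            have h3 : ((n.choose (i+1) * (i+1) : ℕ) : ℝ) = ((n.choose i * (n - i) : ℕ) : ℝ) := by
              exact_mod_cast congrArg (Nat.cast (R := ℝ)) h1
            push_cast [Nat.cast_sub (by omega : i ≤ n)] at h3
            push_cast
            rw [h3]
          have hden : (1 + (n : ℝ) - ((i+1 : ℕ) : ℝ)) = (n:ℝ) - i := by push_cast; ring
          have hpos : (0:ℝ) < (n:ℝ) - i := by
            have : ((i+1 : ℕ) : ℝ) ≤ (n:ℝ) := Nat.cast_le.mpr hin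
            push_cast at this; linarith
          rw [hden, key, mul_div_assoc, div_self (ne_of_gt hpos), mul_one]
        rw [Finset.sum_congr rfl hterm]
        have hle : ∑ i ∈ Finset.range n, (n.choose i : ℝ)
            ≤ ∑ i ∈ Finset.range (n+1), (n.choose i : ℝ) :=
          Finset.sum_le_sum_of_subset_of_nonneg
            (Finset.range_subset_range.mpr (by omega))
            (fun i _ _ => by positivity)
        refine hle.trans ?_
        rw [← Nat.cast_sum]
        rw [Nat.sum_range_choose]
        push_cast
        exact le_rfl
end KO


namespace KO

/-- the quantity `V⁺/(1+V⁻)` at the data-dependent threshold. -/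
noncomputable def Vratio (q : ℝ) {m : ℕ} (S0 : Finset (Fin m)) (w : Fin m → ℝ) : ℝ :=
  if h : (knockoffCandidates 0 q w).Nonempty then
    ((S0.filter fun j => (knockoffCandidates 0 q w).min' h ≤ w j).card : ℝ) /
      (1 + ((S0.filter fun j => w j ≤ -((knockoffCandidates 0 q w).min' h)).card : ℝ))
  else 0

noncomputable def mFDPhat (q : ℝ) {m : ℕ} (S0 : Finset (Fin m)) (w : Fin m → ℝ) : ℝ :=
  (((knockoffSelect 0 q w) ∩ S0).card : ℝ) / (((knockoffSelect 0 q w).card : ℝ) + q⁻¹)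

def flipv (s : Finset (Fin m)) (w : Fin m → ℝ) : Fin m → ℝ :=
  fun j => (if j ∈ s then (-1:ℝ) else 1) * w j

noncomputable def kOf {n m : ℕ} (w : Fin m → ℝ) (e : Fin n → Fin m) (t : ℝ) : ℕ :=
  (Finset.univ.filter fun i : Fin n => |w (e i)| < t).card

noncomputable def epsOf {n m : ℕ} (w : Fin m → ℝ) (e : Fin n → Fin m)
    (s : Finset (Fin m)) : Fin n → Bool :=
  fun i => if (if w (e i) = 0 then (e i ∈ s) else 0 < flipv s w (e i)) then true else false

noncomputable def cplus (S0 : Finset (Fin m)) (w : Fin m → ℝ) (t : ℝ) : ℕ :=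
  ((Finset.univ \ S0).filter fun j => t ≤ w j).card

noncomputable def cminus (S0 : Finset (Fin m)) (w : Fin m → ℝ) (t : ℝ) : ℕ :=
  ((Finset.univ \ S0).filter fun j => w j ≤ -t).card

noncomputable def Pred (q : ℝ) {n m : ℕ} (S0 : Finset (Fin m)) (w : Fin m → ℝ)
    (e : Fin n → Fin m) : ℕ → ℕ → Prop :=
  fun k a => ∃ j : Fin m, 0 < |w j| ∧ kOf w e |w j| = k ∧
    ((0:ℝ) + (((n - k - a) + cminus S0 w |w j| : ℕ) : ℝ)) /
      max (((a + cplus S0 w |w j| : ℕ) : ℝ)) 1 ≤ q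

lemma flipv_abs (s : Finset (Fin m)) (w : Fin m → ℝ) (j : Fin m) :
    |flipv s w j| = |w j| := by
  unfold flipv
  split <;> simp

lemma flipv_off (s : Finset (Fin m)) (w : Fin m → ℝ) (j : Fin m) (h : j ∉ s) :
    flipv s w j = w j := by
  unfold flipv
  rw [if_neg h, one_mul]

lemma card_suffix (n k : ℕ) : (Finset.univ.filter fun i : Fin n => k ≤ (i:ℕ)).card = n - k := by
  rcases le_or_gt n k with h | h
  · rw [Nat.sub_eq_zero_of_le h, Finset.card_eq_zero]
    ext i
    simp only [Finset.mem_filter, Finset.mem_univ, true_and, Finset.notMem_empty, iff_false]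
    have := i.isLt; omega
  · have : (Finset.univ.filter fun i : Fin n => k ≤ (i:ℕ)) = Finset.Ici ⟨k, h⟩ := by
      ext i; simp [Finset.mem_Ici, Fin.le_def]
    rw [this, Fin.card_Ici]

lemma cntA_add_cntB_eq {n : ℕ} (k : ℕ) (ε : Fin n → Bool) : cntA k ε + cntB k ε = n - k := by
  rw [cntA_add_cntB, card_suffix]

lemma kOf_le {n m : ℕ} (w : Fin m → ℝ) (e : Fin n → Fin m) (t : ℝ) : kOf w e t ≤ n := by
  unfold kOf
  calc _ ≤ (Finset.univ : Finset (Fin n)).card := Finset.card_filter_le _ _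
  _ = n := by simp

lemma kOf_mono {n m : ℕ} (w : Fin m → ℝ) (e : Fin n → Fin m) {t t' : ℝ} (h : t ≤ t') :
    kOf w e t ≤ kOf w e t' := by
  apply Finset.card_le_card
  apply Finset.monotone_filter_right
  intro i _ hi
  exact lt_of_lt_of_le hi h

lemma rank_iff {n m : ℕ} (w : Fin m → ℝ) (e : Fin n → Fin m)
    (hmono : Monotone fun i => |w (e i)|) (t : ℝ) (i : Fin n) :
    kOf w e t ≤ (i:ℕ) ↔ t ≤ |w (e i)| := by
  constructor
  · intro hk
    by_contra hlt
    push_neg at hlt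
    have hsub : Finset.Iic i ⊆ Finset.univ.filter fun i' : Fin n => |w (e i')| < t := by
      intro i' hi'
      rw [Finset.mem_Iic] at hi'
      exact Finset.mem_filter.mpr ⟨Finset.mem_univ _, lt_of_le_of_lt (hmono hi') hlt⟩
    have hcard := Finset.card_le_card hsub
    rw [Fin.card_Iic] at hcard
    unfold kOf at hk
    omega
  · intro hle
    have hsub : (Finset.univ.filter fun i' : Fin n => |w (e i')| < t) ⊆ Finset.Iio i := by
      intro i' hi'
      rw [Finset.mem_filter] at hi'
      rw [Finset.mem_Iio]
      by_contra hge
      push_neg at hge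
      exact absurd (lt_of_lt_of_le hi'.2 (hle.trans (hmono hge))) (lt_irrefl _)
    have hcard := Finset.card_le_card hsub
    rw [Fin.card_Iio] at hcard
    exact hcard

lemma mem_flip_pos {n m : ℕ} (w : Fin m → ℝ) (e : Fin n → Fin m)
    (s : Finset (Fin m)) {t : ℝ} (ht : 0 < t) (i : Fin n) :
    t ≤ flipv s w (e i) ↔ (t ≤ |w (e i)| ∧ epsOf w e s i = true) := by
  unfold epsOf
  by_cases h0 : w (e i) = 0
  · have hz : flipv s w (e i) = 0 := by unfold flipv; rw [h0, mul_zero]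
    rw [hz]
    simp only [h0, abs_zero, if_true]
    constructor
    · intro h; linarith
    · rintro ⟨h, -⟩; linarith
  · simp only [h0, if_false]
    have habs : |flipv s w (e i)| = |w (e i)| := flipv_abs s w (e i)
    constructor
    · intro h
      have hpos : 0 < flipv s w (e i) := lt_of_lt_of_le ht h
      constructor
      · rw [← habs]; exact h.trans (le_abs_self _)
      · rw [if_pos hpos]
    · rintro ⟨hle, heq⟩
      have hpos : 0 < flipv s w (e i) := by
        by_contra hnp
        rw [if_neg hnp] at heq
        exact Bool.noConfusion heq
      rw [← abs_of_pos hpos, habs]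
      exact hle

lemma mem_flip_neg {n m : ℕ} (w : Fin m → ℝ) (e : Fin n → Fin m)
    (s : Finset (Fin m)) {t : ℝ} (ht : 0 < t) (i : Fin n) :
    flipv s w (e i) ≤ -t ↔ (t ≤ |w (e i)| ∧ epsOf w e s i = false) := by
  unfold epsOf
  by_cases h0 : w (e i) = 0
  · have hz : flipv s w (e i) = 0 := by unfold flipv; rw [h0, mul_zero]
    rw [hz]
    simp only [h0, abs_zero, if_true]
    constructor
    · intro h; linarith
    · rintro ⟨h, -⟩; linarith
  · simp only [h0, if_false]
    have habs : |flipv s w (e i)| = |w (e i)| := flipv_abs s w (e i)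
    have hfne : flipv s w (e i) ≠ 0 := by
      intro hz
      apply h0
      apply abs_eq_zero.mp
      rw [← habs, hz, abs_zero]
    constructor
    · intro h
      have hneg : flipv s w (e i) < 0 := lt_of_le_of_lt h (by linarith)
      constructor
      · rw [← habs, abs_of_neg hneg]; linarith
      · rw [if_neg (not_lt.mpr hneg.le)]
    · rintro ⟨hle, heq⟩
      have hnpos : ¬ (0 < flipv s w (e i)) := by
        intro hpos
        rw [if_pos hpos] at heq
        exact Bool.noConfusion heq
      have hneg : flipv s w (e i) < 0 := lt_of_le_of_ne (not_lt.mp hnpos) hfne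
      rw [← habs, abs_of_neg hneg] at hle
      linarith


section counts

variable {n m : ℕ} (q : ℝ) (S0 : Finset (Fin m)) (w : Fin m → ℝ) (e : Fin n → Fin m)
  (s : Finset (Fin m))

lemma cardS0_plus (heS : ∀ i, e i ∈ S0) (einj : Function.Injective e)
    (hesurj : ∀ j ∈ S0, ∃ i, e i = j) (hmono : Monotone fun i => |w (e i)|)
    {t : ℝ} (ht : 0 < t) :
    (S0.filter fun j => t ≤ flipv s w j).card = cntA (kOf w e t) (epsOf w e s) := by
  unfold cntA
  symm
  apply Finset.card_bij (fun i _ => e i)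
  · intro i hi
    rw [Finset.mem_filter] at hi ⊢
    exact ⟨heS i, (mem_flip_pos w e s ht i).mpr
      ⟨(rank_iff w e hmono t i).mp hi.2.1, hi.2.2⟩⟩
  · intro i1 _ i2 _ h
    exact einj h
  · intro j hj
    rw [Finset.mem_filter] at hj
    obtain ⟨i, rfl⟩ := hesurj j hj.1
    refine ⟨i, ?_, rfl⟩
    rw [Finset.mem_filter]
    have := (mem_flip_pos w e s ht i).mp hj.2
    exact ⟨Finset.mem_univ _, (rank_iff w e hmono t i).mpr this.1, this.2⟩

lemma cardS0_minus (heS : ∀ i, e i ∈ S0) (einj : Function.Injective e)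
    (hesurj : ∀ j ∈ S0, ∃ i, e i = j) (hmono : Monotone fun i => |w (e i)|)
    {t : ℝ} (ht : 0 < t) :
    (S0.filter fun j => flipv s w j ≤ -t).card = cntB (kOf w e t) (epsOf w e s) := by
  unfold cntB
  symm
  apply Finset.card_bij (fun i _ => e i)
  · intro i hi
    rw [Finset.mem_filter] at hi ⊢
    exact ⟨heS i, (mem_flip_neg w e s ht i).mpr
      ⟨(rank_iff w e hmono t i).mp hi.2.1, hi.2.2⟩⟩
  · intro i1 _ i2 _ h
    exact einj h
  · intro j hj
    rw [Finset.mem_filter] at hj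
    obtain ⟨i, rfl⟩ := hesurj j hj.1
    refine ⟨i, ?_, rfl⟩
    rw [Finset.mem_filter]
    have := (mem_flip_neg w e s ht i).mp hj.2
    exact ⟨Finset.mem_univ _, (rank_iff w e hmono t i).mpr this.1, this.2⟩

lemma card_split (p : Fin m → Prop) :
    (Finset.univ.filter p).card = (S0.filter p).card + ((Finset.univ \ S0).filter p).card := by
  have hu : (Finset.univ : Finset (Fin m)) = S0 ∪ (Finset.univ \ S0) := by
    rw [Finset.union_sdiff_of_subset (Finset.subset_univ S0)]
  conv_lhs => rw [hu]
  rw [Finset.filter_union]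
  exact Finset.card_union_of_disjoint
    (Finset.disjoint_filter_filter Finset.disjoint_sdiff)

lemma Nplus_eq (heS : ∀ i, e i ∈ S0) (einj : Function.Injective e)
    (hesurj : ∀ j ∈ S0, ∃ i, e i = j) (hmono : Monotone fun i => |w (e i)|)
    (hs : s ⊆ S0) {t : ℝ} (ht : 0 < t) :
    (Finset.univ.filter fun j => t ≤ flipv s w j).card
      = cntA (kOf w e t) (epsOf w e s) + cplus S0 w t := by
  rw [card_split S0]
  congr 1
  · exact cardS0_plus S0 w e s heS einj hesurj hmono ht
  · unfold cplus
    apply congrArg Finset.card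
    apply Finset.filter_congr
    intro j hj
    rw [flipv_off s w j (fun hc => ((Finset.mem_sdiff.mp hj).2 (hs hc)))]

lemma Nminus_eq (heS : ∀ i, e i ∈ S0) (einj : Function.Injective e)
    (hesurj : ∀ j ∈ S0, ∃ i, e i = j) (hmono : Monotone fun i => |w (e i)|)
    (hs : s ⊆ S0) {t : ℝ} (ht : 0 < t) :
    (Finset.univ.filter fun j => flipv s w j ≤ -t).card
      = cntB (kOf w e t) (epsOf w e s) + cminus S0 w t := by
  rw [card_split S0]
  congr 1
  · exact cardS0_minus S0 w e s heS einj hesurj hmono ht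
  · unfold cminus
    apply congrArg Finset.card
    apply Finset.filter_congr
    intro j hj
    rw [flipv_off s w j (fun hc => ((Finset.mem_sdiff.mp hj).2 (hs hc)))]

end counts


lemma Vratio_eq_fval {n m : ℕ} (q : ℝ) (S0 : Finset (Fin m)) (w : Fin m → ℝ)
    (e : Fin n → Fin m)
    (heS : ∀ i, e i ∈ S0) (einj : Function.Injective e)
    (hesurj : ∀ j ∈ S0, ∃ i, e i = j) (hmono : Monotone fun i => |w (e i)|)
    (s : Finset (Fin m)) (hs : s ⊆ S0) :
    Vratio q S0 (flipv s w) = fval (Pred q S0 w e) (epsOf w e s) := by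
  have hforward : ∀ t ∈ knockoffCandidates 0 q (flipv s w),
      kOf w e t ∈ stopSet (Pred q S0 w e) (epsOf w e s) := by
    intro t htc
    rw [knockoffCandidates, Finset.mem_filter] at htc
    obtain ⟨himg, htpos, hle⟩ := htc
    rw [Finset.mem_image] at himg
    obtain ⟨j, -, hj⟩ := himg
    rw [flipv_abs] at hj
    rw [stopSet, Finset.mem_filter, Finset.mem_range]
    refine ⟨Nat.lt_succ_of_le (kOf_le w e t), ?_⟩
    unfold Pred
    refine ⟨j, ?_, ?_, ?_⟩
    · rw [hj]; exact htpos
    · rw [hj]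
    · rw [hj]
      rw [Nminus_eq S0 w e s heS einj hesurj hmono hs htpos,
          Nplus_eq S0 w e s heS einj hesurj hmono hs htpos] at hle
      have hAB := cntA_add_cntB_eq (kOf w e t) (epsOf w e s)
      have hBe : n - kOf w e t - cntA (kOf w e t) (epsOf w e s)
          = cntB (kOf w e t) (epsOf w e s) := by omega
      rw [hBe]
      exact hle
  have hback : ∀ k ∈ stopSet (Pred q S0 w e) (epsOf w e s),
      ∃ t ∈ knockoffCandidates 0 q (flipv s w), kOf w e t = k := by
    intro k hk
    rw [stopSet, Finset.mem_filter, Finset.mem_range] at hk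
    unfold Pred at hk
    obtain ⟨-, j, hj0, hjk, hjle⟩ := hk
    refine ⟨|w j|, ?_, hjk⟩
    rw [knockoffCandidates, Finset.mem_filter]
    refine ⟨Finset.mem_image.mpr ⟨j, Finset.mem_univ _, flipv_abs s w j⟩, hj0, ?_⟩
    rw [Nminus_eq S0 w e s heS einj hesurj hmono hs hj0,
        Nplus_eq S0 w e s heS einj hesurj hmono hs hj0, hjk]
    have hAB := cntA_add_cntB_eq k (epsOf w e s)
    have hBe : cntB k (epsOf w e s) = n - k - cntA k (epsOf w e s) := by omega
    rw [hBe]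
    exact hjle
  by_cases h : (knockoffCandidates 0 q (flipv s w)).Nonempty
  · have hne : (stopSet (Pred q S0 w e) (epsOf w e s)).Nonempty := by
      obtain ⟨t, ht⟩ := h
      exact ⟨_, hforward t ht⟩
    unfold Vratio fval
    rw [dif_pos h, dif_pos hne]
    set T := (knockoffCandidates 0 q (flipv s w)).min' h with hT
    have hTmem : T ∈ knockoffCandidates 0 q (flipv s w) := Finset.min'_mem _ h
    have hTpos : 0 < T := by
      have h2 := hTmem
      rw [knockoffCandidates, Finset.mem_filter] at h2
      exact h2.2.1
    have hκ : (stopSet (Pred q S0 w e) (epsOf w e s)).min' hne = kOf w e T := by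
      apply le_antisymm
      · exact Finset.min'_le _ _ (hforward T hTmem)
      · obtain ⟨t', ht', hkt'⟩ := hback _ (Finset.min'_mem _ hne)
        rw [← hkt']
        exact kOf_mono w e (Finset.min'_le _ _ ht')
    rw [hκ]
    rw [cardS0_plus S0 w e s heS einj hesurj hmono hTpos,
        cardS0_minus S0 w e s heS einj hesurj hmono hTpos]
  · unfold Vratio fval
    rw [dif_neg h, dif_neg]
    intro hne
    obtain ⟨k, hk⟩ := hne
    obtain ⟨t, ht, -⟩ := hback k hk
    exact h ⟨t, ht⟩


lemma epsOf_true_iff {n m : ℕ} (w : Fin m → ℝ) (e : Fin n → Fin m)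
    (s : Finset (Fin m)) (i : Fin n) :
    epsOf w e s i = true ↔ (if w (e i) = 0 then e i ∈ s else 0 < flipv s w (e i)) := by
  unfold epsOf
  by_cases hc : (if w (e i) = 0 then e i ∈ s else 0 < flipv s w (e i))
  · simp [hc]
  · simp [hc]

lemma bridge {m : ℕ} (q : ℝ) (S0 : Finset (Fin m)) (w : Fin m → ℝ) :
    ∑ s ∈ S0.powerset, Vratio q S0 (flipv s w) ≤ 2 ^ S0.card := by
  obtain ⟨e, hmono, heS, einj, hesurj⟩ :
      ∃ e : Fin S0.card → Fin m, (Monotone fun i => |w (e i)|) ∧ (∀ i, e i ∈ S0) ∧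
        Function.Injective e ∧ ∀ j ∈ S0, ∃ i, e i = j := by
    refine ⟨fun i => ((S0.equivFin.symm
      ((Tuple.sort (fun i : Fin S0.card => |w ((S0.equivFin.symm i) : Fin m)|)) i)) : Fin m),
      ?_, ?_, ?_, ?_⟩
    · exact Tuple.monotone_sort (fun i : Fin S0.card => |w ((S0.equivFin.symm i) : Fin m)|)
    · intro i; exact Subtype.mem _
    · intro a b h
      exact (Tuple.sort _).injective (S0.equivFin.symm.injective (Subtype.coe_injective h))
    · intro j hj
      exact ⟨(Tuple.sort (fun i : Fin S0.card => |w ((S0.equivFin.symm i) : Fin m)|)).symm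
        (S0.equivFin ⟨j, hj⟩), by simp⟩
  have hVf : ∀ s ∈ S0.powerset, Vratio q S0 (flipv s w) = fval (Pred q S0 w e) (epsOf w e s) :=
    fun s hs => Vratio_eq_fval q S0 w e heS einj hesurj hmono s (Finset.mem_powerset.mp hs)
  rw [Finset.sum_congr rfl hVf]
  have hmemPsi : ∀ (ε : Fin S0.card → Bool) (i : Fin S0.card),
      (e i ∈ S0.filter (fun j => ∃ i', e i' = j ∧
        (if w j = 0 then ε i' = true else (ε i' = true ↔ w j < 0))))
      ↔ (if w (e i) = 0 then ε i = true else (ε i = true ↔ w (e i) < 0)) := by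
    intro ε i
    rw [Finset.mem_filter]
    constructor
    · rintro ⟨-, i', hei', hC⟩
      rwa [einj hei'] at hC
    · intro hC
      exact ⟨heS i, i, rfl, hC⟩
  have hre : ∑ s ∈ S0.powerset, fval (Pred q S0 w e) (epsOf w e s)
      = ∑ ε : Fin S0.card → Bool, fval (Pred q S0 w e) ε := by
    apply Finset.sum_nbij' (i := fun s => epsOf w e s)
      (j := fun ε => S0.filter (fun j => ∃ i, e i = j ∧
        (if w j = 0 then ε i = true else (ε i = true ↔ w j < 0))))
    · intro s _; exact Finset.mem_univ _
    · intro ε _; exact Finset.mem_powerset.mpr (Finset.filter_subset _ _)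
    · -- left inverse : Ψ (Φ s) = s
      intro s hs
      have hsS0 := Finset.mem_powerset.mp hs
      ext j
      rw [Finset.mem_filter]
      constructor
      · rintro ⟨hjS0, i, hei, hC⟩
        subst hei
        by_cases h0 : w (e i) = 0
        · rw [if_pos h0] at hC
          rw [epsOf_true_iff, if_pos h0] at hC
          exact hC
        · rw [if_neg h0] at hC
          rw [epsOf_true_iff, if_neg h0] at hC
          by_contra hns
          have hfl : flipv s w (e i) = w (e i) := flipv_off s w (e i) hns
          rw [hfl] at hC
          rcases lt_or_gt_of_ne h0 with hlt | hgt
          · exact absurd (hC.mpr hlt) (by linarith)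
          · exact absurd (hC.mp hgt) (by linarith)
      · intro hjs
        obtain ⟨i, hei⟩ := hesurj j (hsS0 hjs)
        subst hei
        refine ⟨hsS0 hjs, i, rfl, ?_⟩
        by_cases h0 : w (e i) = 0
        · rw [if_pos h0, epsOf_true_iff, if_pos h0]
          exact hjs
        · rw [if_neg h0, epsOf_true_iff, if_neg h0]
          have hfl : flipv s w (e i) = - w (e i) := by
            unfold flipv; rw [if_pos hjs]; ring
          rw [hfl]
          exact neg_pos
    · -- right inverse : Φ (Ψ ε) = ε
      intro ε _
      funext i
      rw [Bool.eq_iff_iff, epsOf_true_iff]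
      set sΨ := S0.filter (fun j => ∃ i', e i' = j ∧
        (if w j = 0 then ε i' = true else (ε i' = true ↔ w j < 0))) with hsΨ
      by_cases h0 : w (e i) = 0
      · rw [if_pos h0]
        have := hmemPsi ε i
        rw [if_pos h0] at this
        rw [← hsΨ] at this
        exact this
      · rw [if_neg h0]
        have hmem := hmemPsi ε i
        rw [if_neg h0] at hmem
        rw [← hsΨ] at hmem
        rcases lt_or_gt_of_ne h0 with hlt | hgt
        · by_cases hb : ε i = true
          · have hin : e i ∈ sΨ := hmem.mpr (by rw [hb]; exact iff_of_true rfl hlt)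
            have hfl : flipv sΨ w (e i) = - w (e i) := by
              unfold flipv; rw [if_pos hin]; ring
            rw [hfl]
            constructor
            · intro _; exact hb
            · intro _; linarith
          · have hin : e i ∉ sΨ := fun hin => hb ((hmem.mp hin).mpr hlt)
            have hfl : flipv sΨ w (e i) = w (e i) := flipv_off sΨ w (e i) hin
            rw [hfl]
            constructor
            · intro h; linarith
            · intro h; exact absurd h hb
        · by_cases hb : ε i = true
          · have hin : e i ∉ sΨ := by
              intro hin
              have := (hmem.mp hin).mp hb
              linarith
            have hfl : flipv sΨ w (e i) = w (e i) := flipv_off sΨ w (e i) hin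
            rw [hfl]
            exact iff_of_true hgt hb
          · have hin : e i ∈ sΨ := hmem.mpr (by
              constructor
              · intro h; exact absurd h hb
              · intro h; linarith)
            have hfl : flipv sΨ w (e i) = - w (e i) := by
              unfold flipv; rw [if_pos hin]; ring
            rw [hfl]
            constructor
            · intro h; linarith
            · intro h; exact absurd h hb
    · intro s hs; rfl
  rw [hre]
  exact abstract_total S0.card (Pred q S0 w e)


lemma Vratio_nonneg (q : ℝ) {m : ℕ} (S0 : Finset (Fin m)) (w : Fin m → ℝ) :
    0 ≤ Vratio q S0 w := by
  unfold Vratio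
  split
  · positivity
  · exact le_refl 0

lemma mFDPhat_le (q : ℝ) (hq0 : 0 < q) {m : ℕ} (S0 : Finset (Fin m)) (w : Fin m → ℝ) :
    mFDPhat q S0 w ≤ q * Vratio q S0 w := by
  unfold mFDPhat Vratio knockoffSelect
  by_cases h : (knockoffCandidates 0 q w).Nonempty
  · rw [dif_pos h, dif_pos h]
    set T := (knockoffCandidates 0 q w).min' h with hT
    have hTmem : T ∈ knockoffCandidates 0 q w := Finset.min'_mem _ h
    rw [knockoffCandidates, Finset.mem_filter] at hTmem
    obtain ⟨-, hTpos, hle⟩ := hTmem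
    have hint : (Finset.univ.filter fun j => T ≤ w j) ∩ S0
        = S0.filter fun j => T ≤ w j := by
      ext j
      simp only [Finset.mem_inter, Finset.mem_filter, Finset.mem_univ, true_and]
      tauto
    rw [hint]
    set r := (Finset.univ.filter fun j => T ≤ w j).card with hr
    set vp := (S0.filter fun j => T ≤ w j).card with hvp
    set vm := (S0.filter fun j => w j ≤ -T).card with hvm
    have hvp_r : vp ≤ r :=
      Finset.card_le_card (Finset.filter_subset_filter _ (Finset.subset_univ S0))
    have hvm_le : vm ≤ (Finset.univ.filter fun j => w j ≤ -T).card :=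
      Finset.card_le_card (Finset.filter_subset_filter _ (Finset.subset_univ S0))
    rcases Nat.eq_zero_or_pos r with hr0 | hrpos
    · have hvp0 : vp = 0 := by omega
      rw [hvp0]
      have hV : (0:ℝ) ≤ ((vp:ℝ)) / (1 + (vm:ℝ)) := by positivity
      simp only [Nat.cast_zero, zero_div]
      positivity
    · have hrR : (1:ℝ) ≤ (r:ℝ) := by exact_mod_cast hrpos
      have hmax : max ((r:ℕ):ℝ) 1 = (r:ℝ) := max_eq_left hrR
      rw [hmax] at hle
      have hNm : ((Finset.univ.filter fun j => w j ≤ -T).card : ℝ) ≤ q * r := by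
        rw [div_le_iff₀ (by linarith)] at hle
        linarith
      have h1 : (1:ℝ) + (vm:ℝ) ≤ q * ((r:ℝ) + q⁻¹) := by
        have hv : (vm:ℝ) ≤ q * r := le_trans (Nat.cast_le.mpr hvm_le) hNm
        rw [mul_add, mul_inv_cancel₀ (ne_of_gt hq0)]
        linarith
      have hd1 : (0:ℝ) < (r:ℝ) + q⁻¹ := by positivity
      have hd2 : (0:ℝ) < 1 + (vm:ℝ) := by positivity
      rw [← mul_div_assoc, div_le_div_iff₀ hd1 hd2]
      have hvpn : (0:ℝ) ≤ (vp:ℝ) := Nat.cast_nonneg _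
      nlinarith
  · rw [dif_neg h, dif_neg h]
    simp [hq0.le]


lemma mem_knockoffSelect_iff (q : ℝ) {m : ℕ} (w : Fin m → ℝ) (j : Fin m) :
    j ∈ knockoffSelect 0 q w ↔ ∃ t ∈ knockoffCandidates 0 q w, t ≤ w j := by
  unfold knockoffSelect
  by_cases h : (knockoffCandidates 0 q w).Nonempty
  · rw [dif_pos h, Finset.mem_filter]
    simp only [Finset.mem_univ, true_and]
    constructor
    · intro hmin; exact ⟨_, Finset.min'_mem _ h, hmin⟩
    · rintro ⟨t, ht, htj⟩; exact (Finset.min'_le _ _ ht).trans htj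
  · rw [dif_neg h]
    simp only [Finset.notMem_empty, false_iff]
    rintro ⟨t, ht, -⟩
    exact h ⟨t, ht⟩

lemma measurable_cardfilter {m : ℕ} (p : Fin m → (Fin m → ℝ) → Prop) (S : Finset (Fin m))
    [inst : ∀ w, DecidablePred (fun j => p j w)]
    (hp : ∀ j, MeasurableSet {w : Fin m → ℝ | p j w}) :
    Measurable fun w : Fin m → ℝ => ((S.filter fun j => p j w).card : ℝ) := by
  have hfn : (fun w : Fin m → ℝ => ((S.filter fun j => p j w).card : ℝ))
      = fun w => ∑ j ∈ S, if p j w then (1:ℝ) else 0 := by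
    funext w
    rw [Finset.card_filter]
    push_cast
    rfl
  rw [hfn]
  exact Finset.measurable_sum _ (fun j _ =>
    Measurable.ite (hp j) measurable_const measurable_const)

lemma measurableSet_cond (q : ℝ) {m : ℕ} (i : Fin m) :
    MeasurableSet {w : Fin m → ℝ | 0 < |w i| ∧
      ((0:ℝ) + ((Finset.univ.filter fun j' => w j' ≤ -|w i|).card : ℝ)) /
        max ((Finset.univ.filter fun j' => |w i| ≤ w j').card : ℝ) 1 ≤ q} := by
  rw [Set.setOf_and]
  apply MeasurableSet.inter
  · exact measurableSet_lt measurable_const (measurable_pi_apply i).abs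
  · have hr : Measurable (fun w : Fin m → ℝ =>
        ((0:ℝ) + ((Finset.univ.filter fun j' => w j' ≤ -|w i|).card : ℝ)) /
          max ((Finset.univ.filter fun j' => |w i| ≤ w j').card : ℝ) 1) := by
      apply Measurable.div
      · apply Measurable.add measurable_const
        apply measurable_cardfilter
        intro j'
        exact measurableSet_le (measurable_pi_apply j') ((measurable_pi_apply i).abs.neg)
      · apply Measurable.max ?_ measurable_const
        apply measurable_cardfilter
        intro j'
        exact measurableSet_le (measurable_pi_apply i).abs (measurable_pi_apply j')
    exact measurableSet_le hr measurable_const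

lemma measurableSet_select (q : ℝ) {m : ℕ} (j : Fin m) :
    MeasurableSet {w : Fin m → ℝ | j ∈ knockoffSelect 0 q w} := by
  have hiff : {w : Fin m → ℝ | j ∈ knockoffSelect 0 q w}
      = ⋃ i : Fin m, ({w : Fin m → ℝ | 0 < |w i| ∧
          ((0:ℝ) + ((Finset.univ.filter fun j' => w j' ≤ -|w i|).card : ℝ)) /
            max ((Finset.univ.filter fun j' => |w i| ≤ w j').card : ℝ) 1 ≤ q}
        ∩ {w : Fin m → ℝ | |w i| ≤ w j}) := by
    ext w
    simp only [Set.mem_setOf_eq, Set.mem_iUnion, Set.mem_inter_iff]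
    rw [mem_knockoffSelect_iff]
    constructor
    · rintro ⟨t, ht, htj⟩
      rw [knockoffCandidates, Finset.mem_filter, Finset.mem_image] at ht
      obtain ⟨⟨i, -, hi⟩, hcond⟩ := ht
      subst hi
      exact ⟨i, hcond, htj⟩
    · rintro ⟨i, hcond, hij⟩
      refine ⟨|w i|, ?_, hij⟩
      rw [knockoffCandidates, Finset.mem_filter, Finset.mem_image]
      exact ⟨⟨i, Finset.mem_univ _, rfl⟩, hcond⟩
  rw [hiff]
  exact MeasurableSet.iUnion fun i =>
    ((measurableSet_cond q i).inter
      (measurableSet_le (measurable_pi_apply i).abs (measurable_pi_apply j)))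

set_option maxHeartbeats 1000000 in
lemma measurable_mFDPhat (q : ℝ) {m : ℕ} (S0 : Finset (Fin m)) :
    Measurable fun w : Fin m → ℝ => mFDPhat q S0 w := by
  unfold mFDPhat
  apply Measurable.div
  · have hint : ∀ w : Fin m → ℝ, knockoffSelect 0 q w ∩ S0
        = S0.filter (fun j => j ∈ knockoffSelect 0 q w) := by
      intro w
      ext j
      simp only [Finset.mem_inter, Finset.mem_filter]
      tauto
    have heq : (fun w : Fin m → ℝ => (((knockoffSelect 0 q w) ∩ S0).card : ℝ))
        = fun w => ((S0.filter (fun j => j ∈ knockoffSelect 0 q w)).card : ℝ) :=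
      funext fun w => by rw [hint w]
    rw [heq]
    exact measurable_cardfilter (fun j w => j ∈ knockoffSelect 0 q w) S0
      (measurableSet_select q)
  · apply Measurable.add ?_ measurable_const
    have hsel : ∀ w : Fin m → ℝ, knockoffSelect 0 q w
        = Finset.univ.filter (fun j => j ∈ knockoffSelect 0 q w) := by
      intro w
      ext j
      simp only [Finset.mem_filter, Finset.mem_univ, true_and]
    have heq : (fun w : Fin m → ℝ => (((knockoffSelect 0 q w)).card : ℝ))
        = fun w => ((Finset.univ.filter (fun j => j ∈ knockoffSelect 0 q w)).card : ℝ) :=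
      funext fun w => by rw [← hsel w]
    rw [heq]
    exact measurable_cardfilter (fun j w => j ∈ knockoffSelect 0 q w)
      (Finset.univ : Finset (Fin m)) (measurableSet_select q)

lemma mFDPhat_nonneg (q : ℝ) (hq0 : 0 < q) {m : ℕ} (S0 : Finset (Fin m)) (w : Fin m → ℝ) :
    0 ≤ mFDPhat q S0 w := by
  unfold mFDPhat
  have : (0:ℝ) < ((knockoffSelect 0 q w).card : ℝ) + q⁻¹ := by positivity
  positivity

lemma mFDPhat_le_bound (q : ℝ) (hq0 : 0 < q) {m : ℕ} (S0 : Finset (Fin m)) (w : Fin m → ℝ) :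
    mFDPhat q S0 w ≤ (m:ℝ) * q := by
  unfold mFDPhat
  have hdq : (0:ℝ) < ((knockoffSelect 0 q w).card : ℝ) + q⁻¹ := by positivity
  rw [div_le_iff₀ hdq]
  have hcard : (((knockoffSelect 0 q w) ∩ S0).card : ℝ) ≤ (m:ℝ) := by
    have h1 : ((knockoffSelect 0 q w) ∩ S0).card ≤ m := by
      calc _ ≤ (Finset.univ : Finset (Fin m)).card := Finset.card_le_card (Finset.subset_univ _)
      _ = m := by simp
    exact_mod_cast h1
  have hq1 : q * q⁻¹ = 1 := mul_inv_cancel₀ (ne_of_gt hq0)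
  have hc0 : (0:ℝ) ≤ ((knockoffSelect 0 q w).card : ℝ) := Nat.cast_nonneg _
  have hm0 : (0:ℝ) ≤ (m:ℝ) := Nat.cast_nonneg _
  nlinarith [mul_nonneg (mul_nonneg hm0 hq0.le) hc0]

end KO

/-- The (non-plus) knockoff filter controls the modified FDR:
`E[ #(Ŝ ∩ S₀) / (#Ŝ + q⁻¹) ] ≤ q`, under the sign-symmetry of null statistics. -/
theorem knockoff_mFDR_control
    {Ω : Type*} [MeasurableSpace Ω] (μ : Measure Ω) [IsProbabilityMeasure μ]
    {m : ℕ} (W : Fin m → Ω → ℝ) (hmeas : ∀ j, Measurable (W j))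
    (S0 : Finset (Fin m))
    (hsign : ∀ ε : Fin m → ℝ, (∀ j, ε j = 1 ∨ ε j = -1) → (∀ j ∉ S0, ε j = 1) →
      Measure.map (fun ω j => ε j * W j ω) μ = Measure.map (fun ω j => W j ω) μ)
    (q : ℝ) (hq0 : 0 < q) (hq1 : q ≤ 1) :
    ∫ ω, (((knockoffSelect 0 q fun j => W j ω) ∩ S0).card : ℝ) /
        (((knockoffSelect 0 q fun j => W j ω).card : ℝ) + q⁻¹) ∂μ ≤ q := by
  classical
  have hWmeas : Measurable (fun ω => (fun j => W j ω)) := measurable_pi_lambda _ hmeas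
  have hGmeas : Measurable (fun w : Fin m → ℝ => KO.mFDPhat q S0 w) :=
    KO.measurable_mFDPhat q S0
  have hFmeas : ∀ s : Finset (Fin m), Measurable (fun ω => KO.flipv s (fun j => W j ω)) := by
    intro s
    apply measurable_pi_lambda
    intro j
    exact (hmeas j).const_mul _
  have hmap : ∀ s ∈ S0.powerset,
      Measure.map (fun ω => KO.flipv s (fun j => W j ω)) μ
        = Measure.map (fun ω j => W j ω) μ := by
    intro s hs
    exact hsign (fun j => if j ∈ s then (-1:ℝ) else 1)
      (fun j => by by_cases h : j ∈ s <;> simp [h])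
      (fun j hj => if_neg (fun hc => hj (Finset.mem_powerset.mp hs hc)))
  have hint_all : ∀ s : Finset (Fin m),
      Integrable (fun ω => KO.mFDPhat q S0 (KO.flipv s (fun j => W j ω))) μ := by
    intro s
    apply Integrable.mono' (integrable_const ((m:ℝ) * q))
    · exact (hGmeas.comp (hFmeas s)).aestronglyMeasurable
    · apply Filter.Eventually.of_forall
      intro ω
      rw [Real.norm_eq_abs, abs_of_nonneg (KO.mFDPhat_nonneg q hq0 S0 _)]
      exact KO.mFDPhat_le_bound q hq0 S0 _
  have hieq : ∀ s ∈ S0.powerset,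
      ∫ ω, KO.mFDPhat q S0 (KO.flipv s (fun j => W j ω)) ∂μ
        = ∫ ω, KO.mFDPhat q S0 (fun j => W j ω) ∂μ := by
    intro s hs
    rw [← MeasureTheory.integral_map (hFmeas s).aemeasurable hGmeas.aestronglyMeasurable,
        hmap s hs,
        MeasureTheory.integral_map hWmeas.aemeasurable hGmeas.aestronglyMeasurable]
  have hsum_int : ∫ ω, ∑ s ∈ S0.powerset, KO.mFDPhat q S0 (KO.flipv s (fun j => W j ω)) ∂μ
      = ∑ s ∈ S0.powerset, ∫ ω, KO.mFDPhat q S0 (KO.flipv s (fun j => W j ω)) ∂μ :=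
    MeasureTheory.integral_finset_sum _ (fun s _ => hint_all s)
  have hpt : ∀ ω, ∑ s ∈ S0.powerset, KO.mFDPhat q S0 (KO.flipv s (fun j => W j ω))
      ≤ q * 2 ^ S0.card := by
    intro ω
    calc ∑ s ∈ S0.powerset, KO.mFDPhat q S0 (KO.flipv s (fun j => W j ω))
        ≤ ∑ s ∈ S0.powerset, q * KO.Vratio q S0 (KO.flipv s (fun j => W j ω)) :=
          Finset.sum_le_sum (fun s _ => KO.mFDPhat_le q hq0 S0 _)
      _ = q * ∑ s ∈ S0.powerset, KO.Vratio q S0 (KO.flipv s (fun j => W j ω)) := by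
          rw [Finset.mul_sum]
      _ ≤ q * 2 ^ S0.card :=
          mul_le_mul_of_nonneg_left (KO.bridge q S0 _) hq0.le
  have hbound : ∑ s ∈ S0.powerset, ∫ ω, KO.mFDPhat q S0 (KO.flipv s (fun j => W j ω)) ∂μ
      ≤ q * 2 ^ S0.card := by
    rw [← hsum_int]
    calc ∫ ω, ∑ s ∈ S0.powerset, KO.mFDPhat q S0 (KO.flipv s (fun j => W j ω)) ∂μ
        ≤ ∫ (_ : Ω), q * 2 ^ S0.card ∂μ :=
          integral_mono (MeasureTheory.integrable_finset_sum _ (fun s _ => hint_all s))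
            (integrable_const _) hpt
      _ = q * 2 ^ S0.card := by
          rw [MeasureTheory.integral_const]
          simp [measure_univ]
  have hmain : (2 ^ S0.card : ℝ) * ∫ ω, KO.mFDPhat q S0 (fun j => W j ω) ∂μ
      ≤ q * 2 ^ S0.card := by
    calc (2 ^ S0.card : ℝ) * ∫ ω, KO.mFDPhat q S0 (fun j => W j ω) ∂μ
        = ∑ s ∈ S0.powerset, ∫ ω, KO.mFDPhat q S0 (KO.flipv s (fun j => W j ω)) ∂μ := by
          rw [Finset.sum_congr rfl hieq, Finset.sum_const, Finset.card_powerset, nsmul_eq_mul]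
          push_cast
          ring
      _ ≤ q * 2 ^ S0.card := hbound
  have hp2 : (0:ℝ) < 2 ^ S0.card := by positivity
  have hfin : ∫ ω, KO.mFDPhat q S0 (fun j => W j ω) ∂μ ≤ q := by
    have h := hmain
    nlinarith [h, hp2]
  exact hfin
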